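/- arXiv:1210.7997 — 2 statements merged into one kernel-verified Lean document; each statement's English description precedes it below -/
import Mathlib

section
/- Let ω = e^{2πi/3} and l ≥ 3 an integer. Then ∑_{x ∈ {1, ω, ω²}} T_l(x+1, 1) = 3·∑_{l₁ ≡ 1 (mod 3)} (−1)^{l₁−1} ζ(l₁, l₂) + ((l+1)/2)·ζ(l) − T_l(−1, 1), where all sums run over l₁ ≥ 2, l₂ ≥ 1 with l₁ + l₂ = l. -/
open scoped BigOperators
open Finset
open Filter Topology

set_option maxHeartbeats 1000000

/-- The double zeta value ζ(l₁, l₂) = ∑_{m₁ > m₂ > 0} 1/(m₁^l₁ m₂^l₂). -/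
noncomputable def dzeta (l₁ l₂ : ℕ) : ℝ :=
  ∑' p : {q : ℕ+ × ℕ+ // q.2 < q.1}, 1 / ((p.1.1 : ℝ) ^ l₁ * (p.1.2 : ℝ) ^ l₂)

/-- The Riemann zeta value ζ(l) = ∑_{m ≥ 1} 1/m^l. -/
noncomputable def zetav (l : ℕ) : ℝ := ∑' m : ℕ+, 1 / (m : ℝ) ^ l

/-- T_l(x,y) = ∑_{l₁ ≥ 2, l₂ ≥ 1, l₁+l₂=l} x^(l₁-1) y^(l₂-1) ζ(l₁,l₂). -/
noncomputable def Tl (l : ℕ) (x y : ℂ) : ℂ :=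
  ∑ l₁ ∈ Finset.Icc 2 (l - 1), x ^ (l₁ - 1) * y ^ (l - l₁ - 1) * (dzeta l₁ (l - l₁) : ℂ)

noncomputable def omega : ℂ := Complex.exp (2 * Real.pi * Complex.I / 3)




noncomputable def harm (M : ℕ) : ℝ := ∑ i ∈ Finset.range M, 1/((i:ℝ)+1)

lemma harm_succ (M : ℕ) : harm (M+1) = harm M + 1/((M:ℝ)+1) := by
  simp [harm, Finset.sum_range_succ]

lemma harm_shift (c k : ℕ) : ∑ d ∈ Finset.range k, 1/((c:ℝ)+d+1) = harm (c+k) - harm c := by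
  induction k with
  | zero => simp
  | succ k ih =>
    rw [Finset.sum_range_succ, ih, ← Nat.add_assoc, harm_succ]
    push_cast
    ring

lemma harm_sub_le (M j : ℕ) : harm (M+j) - harm M ≤ j/((M:ℝ)+1) := by
  rw [← harm_shift]
  calc ∑ d ∈ Finset.range j, 1/((M:ℝ)+d+1) ≤ ∑ d ∈ Finset.range j, 1/((M:ℝ)+1) := by
        apply Finset.sum_le_sum
        intro i _
        apply one_div_le_one_div_of_le (by positivity)
        have : (0:ℝ) ≤ i := Nat.cast_nonneg i
        linarith
    _ = j/((M:ℝ)+1) := by rw [Finset.sum_const, Finset.card_range]; ring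

lemma harm_sub_nonneg (M j : ℕ) : 0 ≤ harm (M+j) - harm M := by
  rw [← harm_shift]
  positivity

lemma tendsto_harm_sub (j : ℕ) :
    Tendsto (fun M => harm (M+j) - harm M) atTop (nhds 0) := by
  apply squeeze_zero (fun M => harm_sub_nonneg M j) (fun M => harm_sub_le M j)
  have : Tendsto (fun M : ℕ => ((M:ℝ)+1)) atTop atTop := by
    apply tendsto_atTop_add_const_right
    exact tendsto_natCast_atTop_atTop
  simpa [div_eq_mul_inv] using (this.inv_tendsto_atTop).const_mul (j:ℝ)

lemma summable_inv_sq_shift : Summable (fun d : ℕ => 1/(((d:ℝ)+1)^2)) := by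
  have := (summable_nat_add_iff 1).mpr (Real.summable_one_div_nat_pow.mpr (by norm_num : 1 < 2))
  simpa [Nat.cast_add] using this

lemma hasSum_tele (j : ℕ) (hj : 0 < j) :
    HasSum (fun k : ℕ => 1/(((k:ℝ)+1)*((k:ℝ)+1+j))) (harm j / j) := by
  have hjR : (0:ℝ) < j := by exact_mod_cast hj
  have hsum : Summable (fun k : ℕ => 1/(((k:ℝ)+1)*((k:ℝ)+1+j))) := by
    apply Summable.of_nonneg_of_le (fun k => by positivity) _ summable_inv_sq_shift
    intro k
    apply one_div_le_one_div_of_le (by positivity)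
    have hk : (0:ℝ) ≤ k := Nat.cast_nonneg k
    nlinarith [hjR]
  have hps : ∀ M : ℕ, ∑ k ∈ Finset.range M, 1/(((k:ℝ)+1)*((k:ℝ)+1+j))
      = (harm j + harm M - harm (M+j))/j := by
    intro M
    induction M with
    | zero => simp [harm]
    | succ M ih =>
      rw [Finset.sum_range_succ, ih, harm_succ, show M+1+j = (M+j)+1 by ring, harm_succ]
      have h1 : ((M:ℝ)+1) ≠ 0 := by positivity
      have h2 : ((M:ℝ)+1+j) ≠ 0 := by positivity
      push_cast
      field_simp
      ring
  have htend : Tendsto (fun M => ∑ k ∈ Finset.range M, 1/(((k:ℝ)+1)*((k:ℝ)+1+j)))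
      atTop (nhds (harm j / j)) := by
    simp_rw [hps]
    have : Tendsto (fun M : ℕ => harm (M+j) - harm M) atTop (nhds 0) := tendsto_harm_sub j
    have := ((tendsto_const_nhds (x := harm j) (f := atTop)).sub this).div_const (j:ℝ)
    have heq : ∀ M:ℕ, (harm j - (harm (M+j) - harm M))/(j:ℝ) = (harm j + harm M - harm (M+j))/j := by
      intro M; ring_nf
    simp_rw [← heq]
    simpa using this
  have h2 := hsum.hasSum.tendsto_sum_nat
  have h3 := tendsto_nhds_unique h2 htend
  exact h3 ▸ hsum.hasSum

lemma harm_nonneg (M : ℕ) : 0 ≤ harm M := by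
  apply Finset.sum_nonneg; intro i _; positivity

lemma harm_le_sqrt (n : ℕ) : harm n ≤ 2 * Real.sqrt n := by
  induction n with
  | zero => simp [harm]
  | succ n ih =>
    rw [harm_succ]
    have hs : Real.sqrt n ^ 2 = n := Real.sq_sqrt (Nat.cast_nonneg n)
    have ht : Real.sqrt (n+1) ^ 2 = (n:ℝ)+1 := by
      rw [Real.sq_sqrt (by positivity)]
    have hsnn : 0 ≤ Real.sqrt n := Real.sqrt_nonneg n
    have htnn : 0 ≤ Real.sqrt (n+1) := Real.sqrt_nonneg _
    have hle : Real.sqrt (n+1) ≤ (n:ℝ)+1 := by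
      nlinarith [ht]
    have hst : Real.sqrt n ≤ Real.sqrt (n+1) := by
      apply Real.sqrt_le_sqrt; push_cast; linarith
    have key : 1/((n:ℝ)+1) ≤ 2*(Real.sqrt (n+1) - Real.sqrt n) := by
      rw [div_le_iff₀ (by positivity)]
      nlinarith [hs, ht, hst, hle]
    push_cast
    linarith [ih, key]

lemma summable_sqrt_div_sq :
    Summable (fun n : ℕ => Real.sqrt ((n:ℝ)+1) / ((n:ℝ)+1)^2) := by
  have h32 : Summable (fun n : ℕ => 1/((n:ℝ))^(3/2:ℝ)) :=
    Real.summable_one_div_nat_rpow.mpr (by norm_num)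
  have := (summable_nat_add_iff 1).mpr h32
  apply this.congr
  intro n
  have hn : (0:ℝ) < (n:ℝ)+1 := by positivity
  rw [Real.sqrt_eq_rpow]
  push_cast
  rw [← Real.rpow_natCast ((n:ℝ)+1) 2, ← Real.rpow_sub hn, one_div, ← Real.rpow_neg hn.le]
  norm_num

/-- base function on ℕ × ℕ : n = p.1, d = p.2, smaller idx = n+1, larger = n+d+2 -/
noncomputable def base (a b : ℕ) (p : ℕ × ℕ) : ℝ :=
  1 / (((p.1:ℝ) + p.2 + 2) ^ a * ((p.1:ℝ) + 1) ^ b)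

def pairEquiv : ℕ × ℕ ≃ {q : ℕ+ × ℕ+ // q.2 < q.1} where
  toFun p := ⟨(⟨p.1 + p.2 + 2, by omega⟩, ⟨p.1 + 1, by omega⟩), by
    rw [← PNat.coe_lt_coe]; simp⟩
  invFun q := ((q.1.2 : ℕ) - 1, (q.1.1 : ℕ) - (q.1.2 : ℕ) - 1)
  left_inv p := by
    obtain ⟨n, d⟩ := p
    simp
    omega
  right_inv q := by
    obtain ⟨⟨m, n⟩, h⟩ := q
    have h1 : 1 ≤ (n : ℕ) := n.pos
    have h2 : (n : ℕ) < (m : ℕ) := by exact_mod_cast h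
    apply Subtype.ext
    apply Prod.ext <;> (apply PNat.coe_injective; simp) <;> omega

lemma zetav_eq (l : ℕ) : zetav l = ∑' n : ℕ, 1 / ((n:ℝ) + 1) ^ l := by
  rw [zetav, ← Equiv.pnatEquivNat.symm.tsum_eq]
  apply tsum_congr
  intro n
  simp [Equiv.pnatEquivNat, Nat.succPNat]

lemma dzeta_eq (a b : ℕ) : dzeta a b = ∑' p : ℕ × ℕ, base a b p := by
  rw [dzeta, ← pairEquiv.tsum_eq]
  apply tsum_congr
  intro p
  simp [pairEquiv, base]

lemma tele_partial (c M : ℕ) :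
    ∑ d ∈ Finset.range M, (1/((c:ℝ)+d+1) - 1/((c:ℝ)+d+2)) = 1/((c:ℝ)+1) - 1/((c:ℝ)+M+1) := by
  induction M with
  | zero => simp
  | succ M ih =>
    rw [Finset.sum_range_succ, ih]
    push_cast
    ring

lemma sum_range_pow_le (n a M : ℕ) (ha : 2 ≤ a) :
    ∑ d ∈ Finset.range M, 1/(((n:ℝ)+d+2)^a) ≤ 1/((n:ℝ)+1) := by
  have h1 : ∑ d ∈ Finset.range M, 1/(((n:ℝ)+d+2)^a)
      ≤ ∑ d ∈ Finset.range M, (1/((n:ℝ)+d+1) - 1/((n:ℝ)+d+2)) := by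
    apply Finset.sum_le_sum
    intro d _
    have hx : (1:ℝ) ≤ (n:ℝ)+d+2 := by
      have := Nat.cast_nonneg (α := ℝ) n; have := Nat.cast_nonneg (α := ℝ) d; linarith
    have hx0 : (0:ℝ) < (n:ℝ)+d+2 := by positivity
    have hy0 : (0:ℝ) < (n:ℝ)+d+1 := by positivity
    have h2 : ((n:ℝ)+d+2)^2 ≤ ((n:ℝ)+d+2)^a := pow_le_pow_right₀ hx ha
    have h3 : ((n:ℝ)+d+1)*((n:ℝ)+d+2) ≤ ((n:ℝ)+d+2)^a := by nlinarith
    calc 1/(((n:ℝ)+d+2)^a) ≤ 1/(((n:ℝ)+d+1)*((n:ℝ)+d+2)) :=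
          one_div_le_one_div_of_le (by positivity) h3
      _ = 1/((n:ℝ)+d+1) - 1/((n:ℝ)+d+2) := by field_simp; ring
  rw [tele_partial] at h1
  have : (0:ℝ) < (n:ℝ)+M+1 := by positivity
  have h5 : (0:ℝ) < 1/((n:ℝ)+M+1) := by positivity
  linarith

lemma summable_rowpow (n a : ℕ) (ha : 2 ≤ a) :
    Summable (fun d : ℕ => 1/(((n:ℝ)+d+2)^a)) :=
  summable_of_sum_range_le (fun d => by positivity) (fun M => sum_range_pow_le n a M ha)

lemma tsum_rowpow_le (n a : ℕ) (ha : 2 ≤ a) :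
    ∑' d : ℕ, 1/(((n:ℝ)+d+2)^a) ≤ 1/((n:ℝ)+1) :=
  Summable.tsum_le_of_sum_range_le (summable_rowpow n a ha) (fun M => sum_range_pow_le n a M ha)

lemma base_nonneg (a b : ℕ) (p : ℕ × ℕ) : 0 ≤ base a b p := by
  unfold base; positivity

lemma base_eq (a b : ℕ) (n d : ℕ) :
    base a b (n, d) = (1/((n:ℝ)+1)^b) * (1/(((n:ℝ)+d+2)^a)) := by
  unfold base; rw [one_div_mul_one_div]; ring_nf

lemma summable_base_row (a b n : ℕ) (ha : 2 ≤ a) :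
    Summable (fun d : ℕ => base a b (n, d)) := by
  have := (summable_rowpow n a ha).mul_left (1/((n:ℝ)+1)^b)
  exact this.congr (fun d => (base_eq a b n d).symm)

lemma summable_base (a b : ℕ) (ha : 2 ≤ a) (hb : 1 ≤ b) : Summable (base a b) := by
  rw [summable_prod_of_nonneg (fun p => base_nonneg a b p)]
  refine ⟨fun n => summable_base_row a b n ha, ?_⟩
  apply Summable.of_nonneg_of_le (fun n => tsum_nonneg (fun d => base_nonneg a b _))
    _ summable_inv_sq_shift
  intro n
  have h1 : ∑' d : ℕ, base a b (n, d)
      = (1/((n:ℝ)+1)^b) * ∑' d : ℕ, 1/(((n:ℝ)+d+2)^a) := by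
    rw [← tsum_mul_left]
    exact tsum_congr (fun d => base_eq a b n d)
  rw [h1]
  have hN : (1:ℝ) ≤ (n:ℝ)+1 := by
    have := Nat.cast_nonneg (α := ℝ) n; linarith
  have h2 : 1/((n:ℝ)+1)^b ≤ 1/((n:ℝ)+1) := by
    apply one_div_le_one_div_of_le (by positivity)
    calc (n:ℝ)+1 = ((n:ℝ)+1)^1 := (pow_one _).symm
      _ ≤ ((n:ℝ)+1)^b := pow_le_pow_right₀ hN hb
  have h3 := tsum_rowpow_le n a ha
  have h4 : (0:ℝ) ≤ ∑' d : ℕ, 1/(((n:ℝ)+d+2)^a) := tsum_nonneg (fun d => by positivity)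
  calc (1/((n:ℝ)+1)^b) * ∑' d : ℕ, 1/(((n:ℝ)+d+2)^a)
      ≤ (1/((n:ℝ)+1)) * (1/((n:ℝ)+1)) := by
        apply mul_le_mul h2 h3 h4 (by positivity)
    _ = 1/((n:ℝ)+1)^2 := by field_simp

noncomputable def fF (l : ℕ) (p : ℕ × ℕ) : ℝ :=
  ∑ a ∈ Finset.Icc 2 (l-1), (2:ℝ)^(a-1) * base a (l-a) p

noncomputable def Dg (l : ℕ) (p : ℕ × ℕ) : ℝ :=
  if p.2 = p.1 then ((l:ℝ)-2)/(2*((p.1:ℝ)+1)^l) else 0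

noncomputable def Hf (l : ℕ) (p : ℕ × ℕ) : ℝ :=
  if p.2 = p.1 then 0 else
    2/((((p.1:ℝ)+1)+((p.2:ℝ)+1))*(((p.2:ℝ)+1)-((p.1:ℝ)+1))*((p.1:ℝ)+1)^(l-2))

noncomputable def Gf (l : ℕ) (p : ℕ × ℕ) : ℝ :=
  if p.2 = p.1 then 0 else
    (2:ℝ)^(l-1)/(((((p.1:ℝ)+1)+((p.2:ℝ)+1)))^(l-1)*(((p.2:ℝ)+1)-((p.1:ℝ)+1)))

lemma fF_eq (l : ℕ) (hl : 3 ≤ l) (p : ℕ × ℕ) :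
    fF l p = Dg l p + Hf l p - Gf l p := by
  obtain ⟨n, d⟩ := p
  set N : ℝ := (n:ℝ)+1 with hN
  set D : ℝ := (d:ℝ)+1 with hD
  have hN0 : (0:ℝ) < N := by positivity
  have hD0 : (0:ℝ) < D := by positivity
  have hM0 : (0:ℝ) < N + D := by positivity
  have hbase : ∀ a, base a (l-a) (n, d) = 1/((N+D)^a * N^(l-a)) := by
    intro a
    unfold base
    simp only
    rw [show ((n:ℝ) + d + 2) = N + D by rw [hN, hD]; ring]
  by_cases hdn : d = n
  · subst hdn
    have hDN : D = N := by rw [hN, hD]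
    simp only [fF, Dg, Hf, Gf, if_pos rfl, ↓reduceIte]
    have hterm : ∀ a ∈ Finset.Icc 2 (l-1), (2:ℝ)^(a-1) * base a (l-a) (d, d)
        = 1/(2*N^l) := by
      intro a ha
      rw [Finset.mem_Icc] at ha
      have hal : a ≤ l := le_trans ha.2 (Nat.sub_le l 1)
      rw [hbase, hDN]
      have h1 : N + N = 2*N := by ring
      rw [h1, mul_pow]
      have h2 : N^(l-a) * N^a = N^l := by
        rw [← pow_add, Nat.sub_add_cancel hal]
      have h3 : (2:ℝ)^(a-1) * 2 = 2^a := by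
        rw [← pow_succ, Nat.sub_add_cancel (le_trans (by norm_num) ha.1)]
      have h2a : ((2:ℝ)^a) ≠ 0 := by positivity
      have hNl : N^l ≠ 0 := by positivity
      field_simp
      rw [← h3, ← h2]
      ring
    rw [Finset.sum_congr rfl hterm, Finset.sum_const, Nat.card_Icc]
    have hcard : l - 1 + 1 - 2 = l - 2 := by omega
    rw [hcard]
    have hl2 : ((l-2 : ℕ) : ℝ) = (l:ℝ) - 2 := by
      have : (2:ℕ) ≤ l := by omega
      push_cast [this]
      ring
    rw [nsmul_eq_mul, hl2]
    field_simp
    rw [hN]; ring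
  · have hND : N ≠ D := by
      intro h
      apply hdn
      have : (n:ℝ) = d := by rw [hN, hD] at h; linarith
      exact_mod_cast this.symm
    set r : ℝ := 2*N/(N+D) with hr
    have hr1 : r ≠ 1 := by
      rw [hr]
      intro h
      rw [div_eq_one_iff_eq (by positivity)] at h
      apply hND
      linarith
    have hterm : ∀ a ∈ Finset.Icc 2 (l-1), (2:ℝ)^(a-1) * base a (l-a) (n, d)
        = (1/(2*N^l)) * r^a := by
      intro a ha
      rw [Finset.mem_Icc] at ha
      have hal : a ≤ l := le_trans ha.2 (Nat.sub_le l 1)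
      rw [hbase, hr]
      rw [div_pow, mul_pow]
      have h2 : N^(l-a) * N^a = N^l := by
        rw [← pow_add, Nat.sub_add_cancel hal]
      have h3 : (2:ℝ)^(a-1) * 2 = 2^a := by
        rw [← pow_succ, Nat.sub_add_cancel (le_trans (by norm_num) ha.1)]
      have hMa : ((N+D)^a) ≠ 0 := by positivity
      have hNl : (N^l) ≠ 0 := by positivity
      field_simp
      rw [← h3, ← h2]
      ring
    rw [fF, Finset.sum_congr rfl hterm, ← Finset.mul_sum]
    have hIcc : Finset.Icc 2 (l-1) = Finset.Ico 2 l := by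
      rw [← Finset.Ico_add_one_right_eq_Icc]
      congr 1
      omega
    rw [hIcc, geom_sum_Ico hr1 (by omega)]
    simp only [Dg, Hf, Gf, if_neg hdn]
    rw [show ((d:ℝ)+1) = D from hD.symm, show ((n:ℝ)+1) = N from hN.symm]
    -- algebra
    have hrl : r^l = 2^l * N^l / (N+D)^l := by
      rw [hr, div_pow, mul_pow]
    have hr2 : r^2 = 4 * N^2 / (N+D)^2 := by
      rw [hr, div_pow, mul_pow]; norm_num
    have hNl2 : N^(l-2) = N^l / N^2 := by
      rw [pow_sub₀ _ (ne_of_gt hN0) (by omega : 2 ≤ l)]; ring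
    have hMl1 : (N+D)^(l-1) = (N+D)^l / (N+D) := by
      rw [pow_sub₀ _ (ne_of_gt hM0) (by omega : 1 ≤ l)]; ring
    have h2l1 : (2:ℝ)^(l-1) = 2^l / 2 := by
      rw [pow_sub₀ _ (by norm_num) (by omega : 1 ≤ l)]; ring
    rw [hrl, hr2, hNl2, hMl1, h2l1]
    have hrm1 : r - 1 = (N - D)/(N+D) := by
      rw [hr]; field_simp; ring
    rw [hrm1]
    have hP : N^l ≠ 0 := by positivity
    have hQ : (N+D)^l ≠ 0 := by positivity
    have hDN' : D - N ≠ 0 := fun h => hND (by linarith)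
    have hND2 : N - D ≠ 0 := fun h => hND (by linarith)
    have hM : N + D ≠ 0 := ne_of_gt hM0
    have hN' : N ≠ 0 := ne_of_gt hN0
    set P := N^l with hPd
    set Q := (N+D)^l with hQd
    set E := (2:ℝ)^l with hEd
    clear_value P Q E
    clear hrl hr2 hNl2 hMl1 h2l1 hterm hbase hIcc hr1 hr hPd hQd hEd hrm1
    clear_value N D
    clear hN hD hdn hND
    field_simp
    ring
lemma harm_mono : Monotone harm := by
  intro a b hab
  apply Finset.sum_le_sum_of_subset_of_nonneg (Finset.range_subset_range.mpr hab)
  intro i _ _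
  positivity

lemma Hf_diag (l n : ℕ) : Hf l (n, n) = 0 := by simp [Hf]

lemma Hf_tail (l n k : ℕ) :
    Hf l (n, k+(n+1)) = (2/((n:ℝ)+1)^(l-2)) * (1/(((k:ℝ)+1)*(((k:ℝ)+1)+((2*n+2:ℕ):ℝ)))) := by
  unfold Hf
  rw [if_neg (by omega)]
  have h1 : ((n:ℝ)+1)^(l-2) ≠ 0 := by positivity
  push_cast
  rw [show (k:ℝ) + ((n:ℝ)+1) + 1 - ((n:ℝ)+1) = (k:ℝ)+1 by ring,
    show (n:ℝ)+1+((k:ℝ)+((n:ℝ)+1)+1) = (k:ℝ)+1+(2*(n:ℝ)+2) by ring]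
  have h2 : ((k:ℝ)+1) ≠ 0 := by positivity
  have h3 : ((k:ℝ)+1+(2*(n:ℝ)+2)) ≠ 0 := by positivity
  field_simp

lemma hasSum_Hf_tail (l n : ℕ) (hl : 3 ≤ l) :
    HasSum (fun k : ℕ => Hf l (n, k+(n+1))) (harm (2*n+2) / ((n:ℝ)+1)^(l-1)) := by
  have h := (hasSum_tele (2*n+2) (by omega)).mul_left (2/((n:ℝ)+1)^(l-2))
  have hfun : (fun k : ℕ => (2/((n:ℝ)+1)^(l-2)) * (1/(((k:ℝ)+1)*(((k:ℝ)+1)+((2*n+2:ℕ):ℝ)))))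
      = (fun k : ℕ => Hf l (n, k+(n+1))) := funext (fun k => (Hf_tail l n k).symm)
  have hval : (2/((n:ℝ)+1)^(l-2)) * (harm (2*n+2) / ((2*n+2:ℕ):ℝ))
      = harm (2*n+2) / ((n:ℝ)+1)^(l-1) := by
    have h2 : ((2*n+2:ℕ):ℝ) = 2*((n:ℝ)+1) := by push_cast; ring
    have h3 : ((n:ℝ)+1)^(l-1) = ((n:ℝ)+1)^(l-2) * ((n:ℝ)+1) := by
      rw [show l-1 = (l-2)+1 by omega, pow_succ]
    have h4 : ((n:ℝ)+1)^(l-2) ≠ 0 := by positivity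
    rw [h2, h3]
    field_simp
  rw [← hfun, ← hval]
  convert h using 2
lemma Hf_lt (l n d : ℕ) (hl : 3 ≤ l) (h : d < n) :
    Hf l (n, d) = -(1/((n:ℝ)+1)^(l-1)) * (1/((n:ℝ)-d) + 1/((n:ℝ)+d+2)) := by
  unfold Hf
  rw [if_neg (by omega)]
  have h1 : ((n:ℝ)+1)^(l-2) ≠ 0 := by positivity
  have h2 : (0:ℝ) < (n:ℝ)-d := by
    have : (d:ℝ) < n := by exact_mod_cast h
    linarith
  have hNl1 : ((n:ℝ)+1)^(l-1) = ((n:ℝ)+1)^(l-2) * ((n:ℝ)+1) := by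
    rw [show l-1 = (l-2)+1 by omega, pow_succ]
  rw [hNl1]
  set E := ((n:ℝ)+1)^(l-2) with hE
  have hE0 : E ≠ 0 := by positivity
  clear_value E
  rw [show (((n:ℝ)+1)+((d:ℝ)+1))*(((d:ℝ)+1)-((n:ℝ)+1))*E = -((((n:ℝ)+d+2))*(((n:ℝ)-d))*E) by ring]
  rw [div_neg]
  have ha : ((n:ℝ)+d+2) ≠ 0 := by positivity
  have hb : ((n:ℝ)-d) ≠ 0 := ne_of_gt h2
  field_simp
  ring
lemma sum_inv_sub (n : ℕ) : ∑ d ∈ Finset.range n, 1/((n:ℝ)-d) = harm n := by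
  have h := Finset.sum_range_reflect (fun j => 1/((j:ℝ)+1)) n
  rw [harm, ← h]
  apply Finset.sum_congr rfl
  intro j hj
  rw [Finset.mem_range] at hj
  congr 1
  have h1 : ((n - 1 - j : ℕ) : ℝ) = (n:ℝ) - 1 - j := by
    have : 1 + j ≤ n := by omega
    push_cast [Nat.cast_sub (by omega : j ≤ n - 1), Nat.cast_sub (by omega : 1 ≤ n)]
    ring
  rw [h1]
  ring

lemma sum_inv_add (n : ℕ) :
    ∑ d ∈ Finset.range n, 1/((n:ℝ)+d+2) = harm (2*n+1) - harm (n+1) := by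
  have h := harm_shift (n+1) n
  rw [show (n+1)+n = 2*n+1 by omega] at h
  rw [← h]
  apply Finset.sum_congr rfl
  intro j _
  congr 1
  push_cast
  ring

lemma Hf_finsum (l n : ℕ) (hl : 3 ≤ l) :
    ∑ d ∈ Finset.range (n+1), Hf l (n, d)
      = -(1/((n:ℝ)+1)^(l-1)) * (harm n + (harm (2*n+1) - harm (n+1))) := by
  rw [Finset.sum_range_succ, Hf_diag, add_zero]
  have hterm : ∀ d ∈ Finset.range n, Hf l (n, d)
      = -(1/((n:ℝ)+1)^(l-1)) * (1/((n:ℝ)-d) + 1/((n:ℝ)+d+2)) := by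
    intro d hd
    rw [Finset.mem_range] at hd
    exact Hf_lt l n d hl hd
  rw [Finset.sum_congr rfl hterm, ← Finset.mul_sum, Finset.sum_add_distrib,
    sum_inv_sub, sum_inv_add]

lemma Hf_absfinsum (l n : ℕ) (hl : 3 ≤ l) :
    ∑ d ∈ Finset.range (n+1), |Hf l (n, d)|
      = (1/((n:ℝ)+1)^(l-1)) * (harm n + (harm (2*n+1) - harm (n+1))) := by
  have habs : ∀ d ∈ Finset.range (n+1), |Hf l (n, d)| = -Hf l (n, d) := by
    intro d hd
    rw [Finset.mem_range] at hd
    rcases Nat.lt_or_ge d n with h | h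
    · rw [abs_of_nonpos]
      rw [Hf_lt l n d hl h]
      have h2 : (0:ℝ) < (n:ℝ)-d := by
        have : (d:ℝ) < n := by exact_mod_cast h
        linarith
      have h3 : (0:ℝ) < (n:ℝ)+d+2 := by positivity
      have h4 : (0:ℝ) < ((n:ℝ)+1)^(l-1) := by positivity
      have h5 : 0 < 1/((n:ℝ)-d) + 1/((n:ℝ)+d+2) := by positivity
      nlinarith [mul_pos (one_div_pos.mpr h4) h5]
    · have hdn : d = n := by omega
      rw [hdn, Hf_diag]
      simp
  rw [Finset.sum_congr rfl habs, Finset.sum_neg_distrib, Hf_finsum l n hl]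
  ring

lemma summable_Hf_row (l n : ℕ) (hl : 3 ≤ l) : Summable (fun d : ℕ => Hf l (n, d)) := by
  apply (summable_nat_add_iff (n+1)).mp
  exact (hasSum_Hf_tail l n hl).summable

lemma Hf_row_tsum (l n : ℕ) (hl : 3 ≤ l) :
    ∑' d : ℕ, Hf l (n, d) = (3/2) * (1/((n:ℝ)+1)^l) := by
  have h := ((summable_Hf_row l n hl).sum_add_tsum_nat_add (n+1)).symm
  rw [h, Hf_finsum l n hl, (hasSum_Hf_tail l n hl).tsum_eq]
  rw [harm_succ (2*n+1), harm_succ n]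
  have hN : (0:ℝ) < (n:ℝ)+1 := by positivity
  have hNl1 : ((n:ℝ)+1)^l = ((n:ℝ)+1)^(l-1) * ((n:ℝ)+1) := by
    conv_lhs => rw [show l = (l-1)+1 by omega]
    rw [pow_succ]
  rw [hNl1]
  have hE : ((n:ℝ)+1)^(l-1) ≠ 0 := by positivity
  have h2 : ((2*n+1:ℕ):ℝ) = 2*(n:ℝ)+1 := by push_cast; ring
  rw [h2]
  field_simp
  ring
lemma Hf_abs_row_tsum_le (l n : ℕ) (hl : 3 ≤ l) :
    ∑' d : ℕ, |Hf l (n, d)| ≤ 9 * (Real.sqrt ((n:ℝ)+1) / ((n:ℝ)+1)^2) := by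
  have hrow := (summable_Hf_row l n hl).abs
  have h := (hrow.sum_add_tsum_nat_add (n+1)).symm
  rw [h, Hf_absfinsum l n hl]
  have htail : ∑' k : ℕ, |Hf l (n, k+(n+1))| = harm (2*n+2) / ((n:ℝ)+1)^(l-1) := by
    have habs : ∀ k : ℕ, |Hf l (n, k+(n+1))| = Hf l (n, k+(n+1)) := by
      intro k
      rw [abs_of_nonneg]
      rw [Hf_tail]
      positivity
    rw [tsum_congr habs, (hasSum_Hf_tail l n hl).tsum_eq]
  rw [htail]
  have hN1 : (1:ℝ) ≤ (n:ℝ)+1 := by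
    have := Nat.cast_nonneg (α := ℝ) n; linarith
  have hb2 : ((n:ℝ)+1)^2 ≤ ((n:ℝ)+1)^(l-1) := pow_le_pow_right₀ hN1 (by omega)
  have hpos2 : (0:ℝ) < ((n:ℝ)+1)^2 := by positivity
  have hposl : (0:ℝ) < ((n:ℝ)+1)^(l-1) := by positivity
  have hsq : harm (2*n+2) ≤ 3 * Real.sqrt ((n:ℝ)+1) := by
    have h1 := harm_le_sqrt (2*n+2)
    have hc : ((2*n+2:ℕ):ℝ) = 2*((n:ℝ)+1) := by push_cast; ring
    have h2 : Real.sqrt ((2*n+2:ℕ):ℝ) = Real.sqrt 2 * Real.sqrt ((n:ℝ)+1) := by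
      rw [hc, Real.sqrt_mul (by norm_num : (0:ℝ) ≤ 2)]
    have h3 : Real.sqrt 2 ≤ 1.5 := by
      rw [show (1.5:ℝ) = Real.sqrt (1.5^2) from (Real.sqrt_sq (by norm_num)).symm]
      apply Real.sqrt_le_sqrt
      norm_num
    have h4 : Real.sqrt ((n:ℝ)+1) ≥ 0 := Real.sqrt_nonneg _
    calc harm (2*n+2) ≤ 2 * Real.sqrt ((2*n+2:ℕ):ℝ) := h1
      _ = 2 * Real.sqrt 2 * Real.sqrt ((n:ℝ)+1) := by rw [h2]; ring
      _ ≤ 3 * Real.sqrt ((n:ℝ)+1) := by nlinarith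
  have hm1 : harm n ≤ harm (2*n+2) := harm_mono (by omega)
  have hm2 : harm (2*n+1) ≤ harm (2*n+2) := harm_mono (by omega)
  have hm3 : 0 ≤ harm (n+1) := harm_nonneg _
  have hHnn : 0 ≤ harm (2*n+2) := harm_nonneg _
  have hq : 1/((n:ℝ)+1)^(l-1) ≤ 1/((n:ℝ)+1)^2 := one_div_le_one_div_of_le hpos2 hb2
  have hd : harm (2*n+2)/((n:ℝ)+1)^(l-1) = (1/((n:ℝ)+1)^(l-1)) * harm (2*n+2) := by ring
  rw [hd, ← mul_add]
  have htot : harm n + (harm (2*n+1) - harm (n+1)) + harm (2*n+2) ≤ 9 * Real.sqrt ((n:ℝ)+1) := by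
    linarith
  have htotnn : 0 ≤ harm n + (harm (2*n+1) - harm (n+1)) + harm (2*n+2) := by
    have : harm (n+1) ≤ harm (2*n+1) := harm_mono (by omega)
    have := harm_nonneg n
    linarith
  calc (1/((n:ℝ)+1)^(l-1)) * (harm n + (harm (2*n+1) - harm (n+1)) + harm (2*n+2))
      ≤ (1/((n:ℝ)+1)^2) * (9 * Real.sqrt ((n:ℝ)+1)) := by
        apply mul_le_mul hq htot htotnn (by positivity)
    _ = 9 * (Real.sqrt ((n:ℝ)+1) / ((n:ℝ)+1)^2) := by ring

lemma summable_Hf (l : ℕ) (hl : 3 ≤ l) : Summable (Hf l) := by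
  apply Summable.of_abs
  rw [summable_prod_of_nonneg (by intro p; exact abs_nonneg _)]
  constructor
  · intro n
    exact (summable_Hf_row l n hl).abs
  · apply Summable.of_nonneg_of_le (fun n => tsum_nonneg fun d => abs_nonneg _)
      (fun n => Hf_abs_row_tsum_le l n hl)
    exact summable_sqrt_div_sq.mul_left 9

lemma tsum_Hf (l : ℕ) (hl : 3 ≤ l) : ∑' p : ℕ × ℕ, Hf l p = 3/2 * zetav l := by
  rw [Summable.tsum_prod' (summable_Hf l hl) (fun n => summable_Hf_row l n hl)]
  calc ∑' n : ℕ, ∑' d : ℕ, Hf l (n, d) = ∑' n : ℕ, (3/2) * (1/((n:ℝ)+1)^l) :=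
        tsum_congr (fun n => Hf_row_tsum l n hl)
    _ = (3/2) * ∑' n : ℕ, 1/((n:ℝ)+1)^l := tsum_mul_left
    _ = 3/2 * zetav l := by rw [zetav_eq]

lemma summable_zl (l : ℕ) (hl2 : 2 ≤ l) : Summable (fun n : ℕ => 1/((n:ℝ)+1)^l) := by
  apply Summable.of_nonneg_of_le (fun n => by positivity) _ summable_inv_sq_shift
  intro n
  have hN1 : (1:ℝ) ≤ (n:ℝ)+1 := by
    have := Nat.cast_nonneg (α := ℝ) n; linarith
  exact one_div_le_one_div_of_le (by positivity) (pow_le_pow_right₀ hN1 hl2)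

lemma Dg_vanish (l : ℕ) :
    ∀ p : ℕ × ℕ, p ∉ Set.range (fun n : ℕ => ((n, n) : ℕ × ℕ)) → Dg l p = 0 := by
  intro p hp
  obtain ⟨a, b⟩ := p
  have h : ¬ b = a := by
    intro hc
    exact hp ⟨b, by simp [hc]⟩
  simp [Dg, h]

lemma Dg_support (l : ℕ) :
    Function.support (Dg l) ⊆ Set.range (fun n : ℕ => ((n, n) : ℕ × ℕ)) := by
  intro p hp
  by_contra hc
  exact hp (Dg_vanish l p hc)

lemma diag_inj : Function.Injective (fun n : ℕ => ((n, n) : ℕ × ℕ)) := by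
  intro a b h
  simpa using congrArg Prod.fst h

lemma summable_Dg (l : ℕ) (hl : 3 ≤ l) : Summable (Dg l) := by
  apply (Function.Injective.summable_iff diag_inj (Dg_vanish l)).mp
  have h : (Dg l) ∘ (fun n : ℕ => ((n, n) : ℕ × ℕ))
      = fun n : ℕ => (((l:ℝ)-2)/2) * (1/((n:ℝ)+1)^l) := by
    funext n
    have hd : Dg l ((n, n) : ℕ × ℕ) = ((l:ℝ)-2)/(2*((n:ℝ)+1)^l) := by simp [Dg]
    simp only [Function.comp]
    rw [hd]
    ring
  rw [h]
  exact (summable_zl l (by omega)).mul_left _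

lemma tsum_Dg (l : ℕ) (hl : 3 ≤ l) :
    ∑' p : ℕ × ℕ, Dg l p = (((l:ℝ)-2)/2) * zetav l := by
  rw [← Function.Injective.tsum_eq diag_inj (Dg_support l)]
  have h : ∀ n : ℕ, Dg l ((n, n) : ℕ × ℕ) = (((l:ℝ)-2)/2) * (1/((n:ℝ)+1)^l) := by
    intro n
    have hd : Dg l ((n, n) : ℕ × ℕ) = ((l:ℝ)-2)/(2*((n:ℝ)+1)^l) := by simp [Dg]
    rw [hd]
    ring
  rw [tsum_congr h, tsum_mul_left, zetav_eq]

lemma summable_fF (l : ℕ) (hl : 3 ≤ l) : Summable (fF l) := by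
  unfold fF
  apply summable_sum
  intro a ha
  rw [Finset.mem_Icc] at ha
  exact (summable_base a (l-a) ha.1 (by omega)).mul_left _

lemma Gf_eq (l : ℕ) (hl : 3 ≤ l) : Gf l = fun p => Dg l p + Hf l p - fF l p := by
  funext p
  have := fF_eq l hl p
  linarith

lemma summable_Gf (l : ℕ) (hl : 3 ≤ l) : Summable (Gf l) := by
  rw [Gf_eq l hl]
  exact ((summable_Dg l hl).add (summable_Hf l hl)).sub (summable_fF l hl)

lemma Gf_swap (l : ℕ) (p : ℕ × ℕ) : Gf l (Prod.swap p) = - Gf l p := by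
  obtain ⟨n, d⟩ := p
  by_cases h : d = n
  · subst h
    simp [Gf]
  · unfold Gf
    rw [Prod.swap_prod_mk]
    simp only
    rw [if_neg (fun hc => h hc.symm), if_neg h]
    rw [show ((n:ℝ)+1)-((d:ℝ)+1) = -(((d:ℝ)+1)-((n:ℝ)+1)) by ring,
      show ((d:ℝ)+1)+((n:ℝ)+1) = ((n:ℝ)+1)+((d:ℝ)+1) by ring, mul_neg, div_neg]

lemma tsum_Gf (l : ℕ) (hl : 3 ≤ l) : ∑' p : ℕ × ℕ, Gf l p = 0 := by
  have h := (Equiv.prodComm ℕ ℕ).tsum_eq (Gf l)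
  have h2 : ∑' p : ℕ × ℕ, Gf l ((Equiv.prodComm ℕ ℕ) p) = ∑' p : ℕ × ℕ, - Gf l p := by
    apply tsum_congr
    intro p
    rw [Equiv.prodComm_apply, Gf_swap]
  rw [h2, tsum_neg] at h
  linarith

lemma OZ (l : ℕ) (hl : 3 ≤ l) :
    ∑ a ∈ Finset.Icc 2 (l-1), (2:ℝ)^(a-1) * dzeta a (l-a) = (((l:ℝ)+1)/2) * zetav l := by
  have h1 : ∀ a ∈ Finset.Icc 2 (l-1), (2:ℝ)^(a-1) * dzeta a (l-a)
      = ∑' p : ℕ × ℕ, (2:ℝ)^(a-1) * base a (l-a) p := by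
    intro a _
    rw [dzeta_eq, tsum_mul_left]
  rw [Finset.sum_congr rfl h1, ← Summable.tsum_finsetSum (by
    intro a ha
    rw [Finset.mem_Icc] at ha
    exact (summable_base a (l-a) ha.1 (by omega)).mul_left _)]
  have h2 : ∀ p : ℕ × ℕ, ∑ a ∈ Finset.Icc 2 (l-1), (2:ℝ)^(a-1) * base a (l-a) p
      = Dg l p + Hf l p - Gf l p := fun p => fF_eq l hl p
  rw [tsum_congr h2]
  rw [Summable.tsum_sub ((summable_Dg l hl).add (summable_Hf l hl)) (summable_Gf l hl),
    Summable.tsum_add (summable_Dg l hl) (summable_Hf l hl), tsum_Dg l hl, tsum_Hf l hl, tsum_Gf l hl]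
  ring
lemma omega_pow_three : omega^3 = 1 := by
  rw [omega, ← Complex.exp_nat_mul]
  rw [show (3:ℕ) * (2 * (Real.pi:ℂ) * Complex.I / 3) = 2 * (Real.pi:ℂ) * Complex.I by
    push_cast; ring]
  exact Complex.exp_two_pi_mul_I

lemma omega_ne_one : omega ≠ 1 := by
  rw [omega]
  intro h
  rw [Complex.exp_eq_one_iff] at h
  obtain ⟨n, hn⟩ := h
  have hpi : (Real.pi : ℂ) ≠ 0 := by
    exact_mod_cast Real.pi_ne_zero
  have hI : Complex.I ≠ 0 := Complex.I_ne_zero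
  have h3 : (3:ℂ) * n = 1 := by
    have h2 : ((3:ℂ)*n - 1) * (2*(Real.pi:ℂ)*Complex.I) = 0 := by
      linear_combination (-3) * hn
    have hne : 2 * (Real.pi:ℂ) * Complex.I ≠ 0 :=
      mul_ne_zero (mul_ne_zero two_ne_zero hpi) hI
    rcases mul_eq_zero.mp h2 with h2 | h2
    · linear_combination h2
    · exact absurd h2 hne
  have h4 : (3 * n : ℤ) = 1 := by exact_mod_cast h3
  omega

lemma omega_sum : 1 + omega + omega^2 = 0 := by
  have hfac : (omega - 1) * (1 + omega + omega^2) = omega^3 - 1 := by ring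
  rw [omega_pow_three, sub_self] at hfac
  rcases mul_eq_zero.mp hfac with h | h
  · exact absurd (sub_eq_zero.mp h) omega_ne_one
  · exact h

lemma omega_pows (k : ℕ) : omega^k + omega^(2*k) = if k % 3 = 0 then (2:ℂ) else -1 := by
  have h3 := omega_pow_three
  have hmod : ∀ m : ℕ, omega^m = omega^(m % 3) := by
    intro m
    conv_lhs => rw [← Nat.div_add_mod m 3]
    rw [pow_add, pow_mul, h3, one_pow, one_mul]
  rw [hmod k, hmod (2*k)]
  have h2k : (2*k) % 3 = (2 * (k % 3)) % 3 := by
    conv_lhs => rw [← Nat.div_add_mod k 3]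
    omega
  rw [h2k]
  have hsum := omega_sum
  have hk3 : k % 3 = 0 ∨ k % 3 = 1 ∨ k % 3 = 2 := by omega
  rcases hk3 with h | h | h <;> rw [h] <;> norm_num
  · linear_combination hsum
  · linear_combination hsum

lemma coeff_eq (k : ℕ) :
    (1+1:ℂ)^k + (omega+1)^k + (omega^2+1)^k
      = 2^k + (if k % 3 = 0 then (3:ℂ) else 0) * (-1)^k - (-1)^k := by
  have h1 : omega + 1 = -omega^2 := by linear_combination omega_sum
  have h2 : omega^2 + 1 = -omega := by linear_combination omega_sum
  rw [h1, h2, neg_pow, neg_pow]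
  have h3 : (omega^2)^k = omega^(2*k) := by rw [← pow_mul, Nat.mul_comm]
  rw [h3]
  have h4 := omega_pows k
  by_cases h : k % 3 = 0
  · rw [if_pos h] at h4 ⊢
    have : (1+1:ℂ)^k = 2^k := by norm_num
    rw [this]
    linear_combination ((-1:ℂ))^k * h4
  · rw [if_neg h] at h4 ⊢
    have : (1+1:ℂ)^k = 2^k := by norm_num
    rw [this]
    linear_combination ((-1:ℂ))^k * h4


theorem stmt16 (l : ℕ) (hl : 3 ≤ l) :
    Tl l (1 + 1) 1 + Tl l (omega + 1) 1 + Tl l (omega ^ 2 + 1) 1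
      = 3 * (∑ l₁ ∈ (Finset.Icc 2 (l - 1)).filter (fun l₁ => l₁ % 3 = 1),
            (-1 : ℂ) ^ (l₁ - 1) * (dzeta l₁ (l - l₁) : ℂ))
        + (((l : ℂ) + 1) / 2) * (zetav l : ℂ) - Tl l (-1) 1 := by
  have hOZC : (((l:ℂ)+1)/2) * (zetav l : ℂ)
      = ∑ l₁ ∈ Finset.Icc 2 (l-1), (2:ℂ)^(l₁-1) * (dzeta l₁ (l-l₁) : ℂ) := by
    calc (((l:ℂ)+1)/2) * (zetav l : ℂ)
        = ((((l:ℝ)+1)/2 * zetav l : ℝ) : ℂ) := by push_cast; ring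
      _ = ((∑ a ∈ Finset.Icc 2 (l-1), (2:ℝ)^(a-1) * dzeta a (l-a) : ℝ) : ℂ) := by
          rw [OZ l hl]
      _ = ∑ l₁ ∈ Finset.Icc 2 (l-1), (2:ℂ)^(l₁-1) * (dzeta l₁ (l-l₁) : ℂ) := by
          push_cast
          rfl
  have hfilter : (3:ℂ) * (∑ l₁ ∈ (Finset.Icc 2 (l - 1)).filter (fun l₁ => l₁ % 3 = 1),
        (-1 : ℂ) ^ (l₁ - 1) * (dzeta l₁ (l - l₁) : ℂ))
      = ∑ l₁ ∈ Finset.Icc 2 (l-1),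
          (if l₁ % 3 = 1 then (3:ℂ) * ((-1 : ℂ) ^ (l₁ - 1) * (dzeta l₁ (l - l₁) : ℂ)) else 0) := by
    rw [Finset.mul_sum, Finset.sum_filter]
  rw [hfilter, hOZC]
  simp only [Tl, one_pow, mul_one]
  rw [← Finset.sum_add_distrib, ← Finset.sum_add_distrib, ← Finset.sum_add_distrib,
    ← Finset.sum_sub_distrib]
  apply Finset.sum_congr rfl
  intro l₁ hmem
  rw [Finset.mem_Icc] at hmem
  have hiff : (l₁ % 3 = 1) ↔ ((l₁ - 1) % 3 = 0) := by omega
  have hc := coeff_eq (l₁ - 1)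
  by_cases h : l₁ % 3 = 1
  · rw [if_pos h]
    rw [if_pos (hiff.mp h)] at hc
    linear_combination (dzeta l₁ (l - l₁) : ℂ) * hc
  · rw [if_neg h]
    rw [if_neg (fun hc0 => h (hiff.mpr hc0))] at hc
    linear_combination (dzeta l₁ (l - l₁) : ℂ) * hc
end

section
/- Let l ≥ 8 be an integer with l ≡ 2 (mod 6). Then ∑_{j=0, j ≡ 4 (mod 6)}^{l} ζ(j)·ζ(l−j) = ((l−1)/6)·ζ(l), where ζ(0) terms do not occur since j ≡ 4 (mod 6) forces 4 ≤ j ≤ l−4. -/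
open scoped BigOperators
open Finset

section RamanujanAux

open PowerSeries



noncomputable def z3 : ℂ := (-1 + Real.sqrt 3 * Complex.I)/2

lemma hz3 : z3^2 + z3 + 1 = 0 := by
  have h3 : (Real.sqrt 3 : ℂ)^2 = 3 := by
    norm_cast
    rw [Real.sq_sqrt]; · norm_num
  have hI := Complex.I_sq
  unfold z3
  linear_combination (Complex.I^2/4) * h3 + (3/4) * hI

lemma z3_ne : z3 ≠ 0 := by
  intro h
  have := hz3
  rw [h] at this
  norm_num at this

lemma z3_cube : z3^3 = 1 := by linear_combination (z3 - 1) * hz3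

lemma z3_pow_mod (m : ℕ) : z3 ^ m = z3 ^ (m % 3) := by
  conv_lhs => rw [← Nat.div_add_mod m 3]
  rw [pow_add, pow_mul, z3_cube, one_pow, one_mul]

lemma one_add_z3 : (1 : ℂ) + z3 = -z3^2 := by linear_combination hz3

lemma one_add_z3_ne : (1 : ℂ) + z3 ≠ 0 := by
  rw [one_add_z3]
  simp [z3_ne]

lemma derivExp : d⁄dX ℂ (exp ℂ) = exp ℂ := by
  ext n
  rw [coeff_derivative, coeff_exp, coeff_exp, eq_ratCast, eq_ratCast]
  have h1 : ((n:ℂ)+1) ≠ 0 := Nat.cast_add_one_ne_zero n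
  have h2 : ((n.factorial : ℂ)) ≠ 0 := by exact_mod_cast Nat.cast_ne_zero.mpr n.factorial_ne_zero
  rw [Nat.factorial_succ]
  push_cast
  field_simp

noncomputable def bC (n : ℕ) : ℂ := (bernoulli n : ℂ) / n.factorial

lemma coeff_B (n : ℕ) : coeff n (bernoulliPowerSeries ℂ) = bC n := by
  rw [bernoulliPowerSeries, coeff_mk, eq_ratCast, bC]
  push_cast
  ring

lemma star (c : ℂ) (hc : c ≠ 0) (hc1 : (1:ℂ) + c ≠ 0) :
    C (1+c) * (bernoulliPowerSeries ℂ * rescale c (bernoulliPowerSeries ℂ))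
      = rescale (1+c) (bernoulliPowerSeries ℂ) *
        (C c * bernoulliPowerSeries ℂ + rescale c (bernoulliPowerSeries ℂ) + C c * X) := by
  set B := bernoulliPowerSeries ℂ with hB
  set E := exp ℂ with hE
  have h1 : B * (E - 1) = X := bernoulliPowerSeries_mul_exp_sub_one ℂ
  have h2 : rescale c B * (rescale c E - 1) = C c * X := by
    have := congrArg (rescale c) h1
    rwa [map_mul, map_sub, map_one, rescale_X] at this
  have h3 : rescale (1+c) B * (rescale (1+c) E - 1) = C (1+c) * X := by
    have := congrArg (rescale (1+c)) h1
    rwa [map_mul, map_sub, map_one, rescale_X] at this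
  have h4 : E * rescale c E = rescale (1+c) E := by
    have := exp_mul_exp_eq_exp_add (1:ℂ) c
    rwa [rescale_one, RingHom.id_apply] at this
  have hce : coeff 1 E = 1 := by rw [hE, coeff_exp]; norm_num
  have hd1 : (E - 1 : PowerSeries ℂ) ≠ 0 := by
    intro h
    have := congrArg (coeff 1) h
    simp [hce] at this
  have hd2 : (rescale c E - 1 : PowerSeries ℂ) ≠ 0 := by
    intro h
    have := congrArg (coeff 1) h
    simp [coeff_rescale, hce, hc] at this
  have hd3 : (rescale (1+c) E - 1 : PowerSeries ℂ) ≠ 0 := by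
    intro h
    have := congrArg (coeff 1) h
    simp [coeff_rescale, hce, hc1] at this
  apply mul_right_cancel₀ (mul_ne_zero (mul_ne_zero hd1 hd2) hd3)
  set Bc := rescale c B
  set B2 := rescale (1+c) B
  set Ec := rescale c E
  set E2 := rescale (1+c) E
  set d1 := E - 1
  set d2 := Ec - 1
  set d3 := E2 - 1
  linear_combination (C (1+c) * Bc * d2 * d3 - C (1+c) * C c * X * d2) * h1
    + (C (1+c) * X * d3 - C (1+c) * X * d1) * h2
    - ((C c * B + Bc + C c * X) * d1 * d2) * h3
    - C (1+c) * C c * X^2 * h4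

lemma euler_ps :
    bernoulliPowerSeries ℂ * bernoulliPowerSeries ℂ
      = bernoulliPowerSeries ℂ - X * bernoulliPowerSeries ℂ
        - X * (d⁄dX ℂ (bernoulliPowerSeries ℂ)) := by
  set B := bernoulliPowerSeries ℂ with hB
  set E := exp ℂ with hE
  have h1 : B * (E - 1) = X := bernoulliPowerSeries_mul_exp_sub_one ℂ
  have hD := congrArg (d⁄dX ℂ) h1
  rw [Derivation.leibniz, derivative_X, map_sub, Derivation.map_one_eq_zero, hE, derivExp,
    ← hE] at hD
  rw [smul_eq_mul, smul_eq_mul, sub_zero] at hD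
  linear_combination B * hD - ((d⁄dX ℂ B) + B) * h1

lemma hBBc (l : ℕ) (f g : PowerSeries ℂ) :
    coeff l (f * g) = ∑ i ∈ range (l+1), coeff i f * coeff (l-i) g := by
  rw [coeff_mul, Finset.Nat.sum_antidiagonal_eq_sum_range_succ_mk]

lemma partA (l : ℕ) (hl : 8 ≤ l) (h6 : l % 6 = 2) :
    ∑ i ∈ (range (l+1)).filter (fun i => i % 6 = 4), bC i * bC (l-i)
    = (1 - (l:ℂ))/3 * bC l := by
  -- basic facts
  have hbodd : ∀ m : ℕ, m % 2 = 1 → m ≠ 1 → bC m = 0 := by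
    intro m hm hm1
    have h0 : bernoulli m = 0 := by
      rw [bernoulli_eq_bernoulli'_of_ne_one hm1]
      exact bernoulli'_eq_zero_of_odd (Nat.odd_iff.mpr hm) (by omega)
    simp [bC, h0]
  have hsodd : ∀ j : ℕ, j ≤ l → j % 2 = 1 → bC j * bC (l-j) = 0 := by
    intro j hj hjo
    rcases eq_or_ne j 1 with rfl | hj1
    · have : bC (l-1) = 0 := hbodd _ (by omega) (by omega)
      rw [this, mul_zero]
    · rw [hbodd j hjo hj1, zero_mul]
  -- the three sums
  set S1 := ∑ i ∈ range (l+1), z3^i * (bC i * bC (l-i)) with hS1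
  set S2 := ∑ i ∈ range (l+1), z3^(2*i) * (bC i * bC (l-i)) with hS2
  set So := ∑ i ∈ range (l+1), bC i * bC (l-i) with hSo
  -- star identity coefficients
  have hstar := congrArg (coeff l) (star z3 z3_ne one_add_z3_ne)
  rw [coeff_C_mul, hBBc, hBBc] at hstar
  simp only [map_add, coeff_C_mul, coeff_rescale, coeff_B, coeff_X] at hstar
  -- LHS is (1+z3) * S1
  have hL : ∑ i ∈ range (l+1), bC i * (z3^(l-i) * bC (l-i)) = S1 := by
    have hrefl := Finset.sum_range_reflect (fun i => z3^(l-i) * (bC i * bC (l-i))) (l+1)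
    calc ∑ i ∈ range (l+1), bC i * (z3^(l-i) * bC (l-i))
        = ∑ i ∈ range (l+1), z3^(l-i) * (bC i * bC (l-i)) := by
          apply Finset.sum_congr rfl; intro i _; ring
      _ = ∑ i ∈ range (l+1), z3^(l-(l+1-1-i)) * (bC (l+1-1-i) * bC (l-(l+1-1-i))) := hrefl.symm
      _ = S1 := by
          apply Finset.sum_congr rfl
          intro i hi
          rw [Finset.mem_range] at hi
          have h1 : l + 1 - 1 - i = l - i := by omega
          have h2 : l - (l - i) = i := by omega
          rw [h1, h2, mul_comm (bC (l-i))]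
  -- RHS is z3 * S2 + z3^2 * S1
  have hR : ∑ i ∈ range (l+1), (1+z3)^i * bC i *
        (z3 * bC (l-i) + z3^(l-i) * bC (l-i) + z3 * (if l-i = 1 then 1 else 0))
      = z3 * S2 + z3^2 * S1 := by
    have key : ∀ i ∈ range (l+1), (1+z3)^i * bC i *
        (z3 * bC (l-i) + z3^(l-i) * bC (l-i) + z3 * (if l-i = 1 then 1 else 0))
        = z3 * (z3^(2*i) * (bC i * bC (l-i))) + z3^2 * (z3^i * (bC i * bC (l-i))) := by
      intro i hi
      rw [Finset.mem_range] at hi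
      rcases eq_or_ne (l - i) 1 with h1 | h1
      · have : bC i = 0 := hbodd i (by omega) (by omega)
        rw [this]; ring
      · rw [if_neg h1]
        rcases Nat.even_or_odd i with he | ho
        · have hpow : (1+z3)^i = z3^(2*i) := by
            rw [one_add_z3, neg_pow, he.neg_one_pow, one_mul, ← pow_mul]
          have hmod : z3^(l-i) * z3^(2*i) = z3^(2+i) * 1 := by
            rw [← pow_add, z3_pow_mod (l-i+2*i), z3_pow_mod (2+i)]
            have : (l-i+2*i) % 3 = (2+i) % 3 := by omega
            rw [this, mul_one]
          calc (1+z3)^i * bC i * (z3 * bC (l-i) + z3^(l-i) * bC (l-i) + z3 * 0)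
              = z3 * (z3^(2*i) * (bC i * bC (l-i))) + (z3^(l-i) * z3^(2*i)) * (bC i * bC (l-i)) := by
                rw [hpow]; ring
            _ = _ := by rw [hmod, pow_add]; ring
        · have : bC i * bC (l-i) = 0 := hsodd i (by omega) (Nat.odd_iff.mp ho)
          rcases eq_or_ne i 1 with rfl | hi1
          · have hbl : bC (l-1) = 0 := hbodd _ (by omega) (by omega)
            rw [hbl]; ring
          · rw [hbodd i (Nat.odd_iff.mp ho) hi1]; ring
    rw [Finset.sum_congr rfl key, Finset.sum_add_distrib, ← Finset.mul_sum, ← Finset.mul_sum]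
  -- symmetry: S2 = z3 * S1
  have hsym : S2 = z3 * S1 := by
    have hrefl := Finset.sum_range_reflect (fun i => z3^(2*i) * (bC i * bC (l-i))) (l+1)
    calc S2 = ∑ i ∈ range (l+1), z3^(2*(l+1-1-i)) * (bC (l+1-1-i) * bC (l-(l+1-1-i))) := hrefl.symm
      _ = ∑ i ∈ range (l+1), z3 * (z3^i * (bC i * bC (l-i))) := by
          apply Finset.sum_congr rfl
          intro i hi
          rw [Finset.mem_range] at hi
          have h1 : l + 1 - 1 - i = l - i := by omega
          have h2 : l - (l - i) = i := by omega
          rw [h1, h2]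
          have hmod : z3^(2*(l-i)) = z3^(1+i) * 1 := by
            rw [z3_pow_mod (2*(l-i)), z3_pow_mod (1+i)]
            have : (2*(l-i)) % 3 = (1+i) % 3 := by omega
            rw [this, mul_one]
          rw [hmod, pow_add]
          ring
      _ = z3 * S1 := by rw [← Finset.mul_sum]
  -- conclude S1 = 0
  rw [hL, hR] at hstar
  have hS10 : S1 = 0 := by
    have h3 : (3 * z3^2) * S1 = 0 := by
      rw [hsym] at hstar
      linear_combination S1 * hz3 - hstar
    exact (mul_eq_zero.mp h3).resolve_left
      (mul_ne_zero (by norm_num) (pow_ne_zero _ z3_ne))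
  have hS20 : S2 = 0 := by rw [hsym, hS10, mul_zero]
  -- root of unity filter
  have hfilter : So = 3 * ∑ i ∈ (range (l+1)).filter (fun i => i % 3 = 1), bC i * bC (l-i) := by
    have expand : ∑ i ∈ range (l+1), (1 + z3^(2+i) + z3^(2*i+1)) * (bC i * bC (l-i))
        = So + z3^2 * S1 + z3 * S2 := by
      rw [hSo, hS1, hS2, Finset.mul_sum, Finset.mul_sum, ← Finset.sum_add_distrib,
        ← Finset.sum_add_distrib]
      apply Finset.sum_congr rfl
      intro i _
      rw [pow_add z3 2 i, pow_add z3 (2*i) 1]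
      ring
    have h0 : So = ∑ i ∈ range (l+1), (1 + z3^(2+i) + z3^(2*i+1)) * (bC i * bC (l-i)) := by
      rw [expand, hS10, hS20]
      ring
    rw [h0]
    have h1 : ∀ i ∈ range (l+1), (1 + z3^(2+i) + z3^(2*i+1)) * (bC i * bC (l-i))
        = (if i % 3 = 1 then (3:ℂ) else 0) * (bC i * bC (l-i)) := by
      intro i _
      have hm : i % 3 = 0 ∨ i % 3 = 1 ∨ i % 3 = 2 := by omega
      rcases hm with h | h | h
      · rw [if_neg (by omega), z3_pow_mod (2+i), z3_pow_mod (2*i+1),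
          show (2+i)%3 = 2 by omega, show (2*i+1)%3 = 1 by omega]
        linear_combination (bC i * bC (l-i)) * hz3
      · rw [if_pos h, z3_pow_mod (2+i), z3_pow_mod (2*i+1),
          show (2+i)%3 = 0 by omega, show (2*i+1)%3 = 0 by omega]
        norm_num
      · rw [if_neg (by omega), z3_pow_mod (2+i), z3_pow_mod (2*i+1),
          show (2+i)%3 = 1 by omega, show (2*i+1)%3 = 2 by omega]
        linear_combination (bC i * bC (l-i)) * hz3
    rw [Finset.sum_congr rfl h1, Finset.mul_sum, Finset.sum_filter]
    apply Finset.sum_congr rfl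
    intro i _
    rw [ite_mul, zero_mul]
  -- change filter from mod 3 to mod 6
  have hff : ∑ i ∈ (range (l+1)).filter (fun i => i % 3 = 1), bC i * bC (l-i)
      = ∑ i ∈ (range (l+1)).filter (fun i => i % 6 = 4), bC i * bC (l-i) := by
    rw [Finset.sum_filter, Finset.sum_filter]
    apply Finset.sum_congr rfl
    intro i hi
    rw [Finset.mem_range] at hi
    by_cases h4 : i % 6 = 4
    · rw [if_pos (by omega : i % 3 = 1), if_pos h4]
    · rw [if_neg h4]
      by_cases h3 : i % 3 = 1
      · rw [if_pos h3]
        exact hsodd i (by omega) (by omega)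
      · rw [if_neg h3]
  -- Euler identity
  have heuler := congrArg (coeff l) euler_ps
  have hXf : ∀ f : PowerSeries ℂ, coeff l (X * f) = coeff (l-1) f := by
    intro f
    have h := coeff_succ_X_mul (R := ℂ) (l-1) f
    rwa [Nat.sub_add_cancel (by omega : 1 ≤ l)] at h
  rw [hBBc, map_sub, map_sub, hXf, hXf, coeff_derivative] at heuler
  simp only [coeff_B] at heuler
  rw [Nat.sub_add_cancel (by omega : 1 ≤ l)] at heuler
  have hcast : ((l - 1 : ℕ) : ℂ) + 1 = (l : ℂ) := by
    push_cast [Nat.cast_sub (by omega : 1 ≤ l)]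
    ring
  rw [hcast] at heuler
  have hbl1 : bC (l-1) = 0 := hbodd _ (by omega) (by omega)
  rw [hbl1] at heuler
  rw [← hSo] at heuler
  -- conclude
  have h9 : (3:ℂ) * ∑ i ∈ (range (l+1)).filter (fun i => i % 6 = 4), bC i * bC (l-i)
      = (1 - (l:ℂ)) * bC l := by
    rw [← hff, ← hfilter]
    linear_combination heuler
  linear_combination h9 / 3


lemma zetav_even (m : ℕ) (hm2 : m % 2 = 0) (hm0 : m ≠ 0) :
    zetav m = (-1:ℝ)^(m/2+1) * 2^(m-1) * Real.pi^m * (bernoulli m : ℝ) / (m.factorial : ℝ) := by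
  obtain ⟨k, rfl⟩ : ∃ k, m = 2*k := ⟨m/2, by omega⟩
  have hk : k ≠ 0 := by omega
  have h := hasSum_zeta_nat hk
  have hsupp : ∀ x : ℕ, x ∉ Set.range (PNat.val) → 1/(x:ℝ)^(2*k) = 0 := by
    intro x hx
    have hx0 : x = 0 := by
      by_contra h0
      exact hx ⟨⟨x, Nat.pos_of_ne_zero h0⟩, rfl⟩
    rw [hx0]
    rw [Nat.cast_zero, zero_pow (by omega), div_zero]
  have h2 : HasSum (fun m : ℕ+ => 1/((m : ℕ):ℝ)^(2*k))
      ((-1 : ℝ) ^ (k + 1) * (2 : ℝ) ^ (2 * k - 1) * Real.pi ^ (2 * k) *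
        bernoulli (2 * k) / ((2 * k).factorial : ℝ)) :=
    (Function.Injective.hasSum_iff PNat.coe_injective hsupp).mpr h
  have h3 : zetav (2*k) = ((-1 : ℝ) ^ (k + 1) * (2 : ℝ) ^ (2 * k - 1) * Real.pi ^ (2 * k) *
      bernoulli (2 * k) / ((2 * k).factorial : ℝ)) := by
    rw [zetav]
    exact h2.tsum_eq
  rw [h3, show 2*k/2 = k from by omega]


end RamanujanAux

theorem stmt19 (l : ℕ) (hl : 8 ≤ l) (h6 : l % 6 = 2) :
    ∑ j ∈ (Finset.range (l + 1)).filter (fun j => j % 6 = 4),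
      zetav j * zetav (l - j)
      = (((l : ℝ) - 1) / 6) * zetav l := by
  have hAR : ∑ i ∈ (range (l+1)).filter (fun i => i % 6 = 4),
      (bernoulli i : ℝ)/(i.factorial : ℝ) * ((bernoulli (l-i) : ℝ)/((l-i).factorial : ℝ))
      = (1 - (l:ℝ))/3 * ((bernoulli l : ℝ)/(l.factorial : ℝ)) := by
    have hA := partA l hl h6
    simp only [bC] at hA
    apply Complex.ofReal_injective
    push_cast
    linear_combination hA
  have hterm : ∀ i ∈ (range (l+1)).filter (fun i => i % 6 = 4),
      zetav i * zetav (l-i)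
      = ((-1:ℝ)^(l/2) * 2^(l-2) * Real.pi^l) *
        ((bernoulli i : ℝ)/(i.factorial : ℝ) * ((bernoulli (l-i) : ℝ)/((l-i).factorial : ℝ))) := by
    intro i hi
    rw [Finset.mem_filter, Finset.mem_range] at hi
    obtain ⟨hir, hi6⟩ := hi
    have hi1 : i % 2 = 0 := by omega
    have hi0 : i ≠ 0 := by omega
    have hli2 : (l - i) % 2 = 0 := by omega
    have hli0 : l - i ≠ 0 := by omega
    rw [zetav_even i hi1 hi0, zetav_even (l-i) hli2 hli0]
    have e1 : (-1:ℝ)^(i/2+1) * (-1:ℝ)^((l-i)/2+1) = (-1:ℝ)^(l/2) := by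
      rw [← pow_add, show i/2+1+((l-i)/2+1) = l/2 + 2*1 from by omega, pow_add]
      norm_num
    have e2 : (2:ℝ)^(i-1) * (2:ℝ)^(l-i-1) = 2^(l-2) := by
      rw [← pow_add, show (i-1)+(l-i-1) = l-2 from by omega]
    have e3 : Real.pi^i * Real.pi^(l-i) = Real.pi^l := by
      rw [← pow_add, show i+(l-i) = l from by omega]
    calc ((-1:ℝ)^(i/2+1) * 2^(i-1) * Real.pi^i * (bernoulli i : ℝ) / (i.factorial : ℝ)) *
          ((-1:ℝ)^((l-i)/2+1) * 2^(l-i-1) * Real.pi^(l-i) * (bernoulli (l-i) : ℝ)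
            / ((l-i).factorial : ℝ))
        = ((-1:ℝ)^(i/2+1) * (-1:ℝ)^((l-i)/2+1)) * ((2:ℝ)^(i-1) * (2:ℝ)^(l-i-1)) *
            (Real.pi^i * Real.pi^(l-i)) *
            ((bernoulli i : ℝ)/(i.factorial : ℝ) *
              ((bernoulli (l-i) : ℝ)/((l-i).factorial : ℝ))) := by ring
      _ = _ := by rw [e1, e2, e3]
  rw [Finset.sum_congr rfl hterm, ← Finset.mul_sum, hAR,
    zetav_even l (by omega) (by omega)]
  have h2p : (2:ℝ)^(l-1) = 2 * 2^(l-2) := by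
    rw [show l-1 = (l-2)+1 from by omega, pow_succ]
    ring
  have hmp : (-1:ℝ)^(l/2+1) = -(-1:ℝ)^(l/2) := by rw [pow_succ]; ring
  rw [h2p, hmp]
  ring
end
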